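/- Let (X,d_X) be a complete extended metric space in which every closed ball of finite radius is compact, and let (Y,d_Y) be any extended metric space. Let H be the set of nonexpansive maps Y → X equipped with the metric D := (d_sup)_ℓ, the intrinsic metric associated to the supremum metric d_sup on H. Then (H,D) is a complete extended metric space, and it is convex: any f,g ∈ H with D(f,g) < ∞ are connected by a 1-Lipschitz curve [0,D(f,g)] → (H,d_sup) with endpoints f and g. -/

import Mathlib

open ENNReal NNReal

/-- The space of nonexpansive (`1`-Lipschitz) maps `Y → X` between extended metric spaces. -/
def NonexpMap (Y X : Type*) [EMetricSpace Y] [EMetricSpace X] : Type _ :=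
  {f : Y → X // LipschitzWith 1 f}

/-- The supremum extended metric on the space of nonexpansive maps. -/
noncomputable instance NonexpMap.instEMetricSpace (Y X : Type*) [EMetricSpace Y]
    [EMetricSpace X] : EMetricSpace (NonexpMap Y X) where
  edist f g := ⨆ y : Y, edist (f.1 y) (g.1 y)
  edist_self f := by simp
  edist_comm f g := by simp [edist_comm]
  edist_triangle f g h :=
    iSup_le fun y =>
      le_trans (edist_triangle (f.1 y) (g.1 y) (h.1 y))
        (add_le_add (le_iSup (fun y => edist (f.1 y) (g.1 y)) y)
          (le_iSup (fun y => edist (g.1 y) (h.1 y)) y))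
  eq_of_edist_eq_zero := by
    intro f g h
    refine Subtype.ext (funext fun y => ?_)
    exact eq_of_edist_eq_zero
      (le_antisymm (le_trans (le_iSup (fun y => edist (f.1 y) (g.1 y)) y) h.le) (by simp))

/-- The intrinsic (length) extended distance associated to an extended metric:
the infimum of lengths `ℓ` of `1`-Lipschitz curves `[0, ℓ] → X` joining the two points. -/
noncomputable def intrinsicEDist {X : Type*} [EMetricSpace X] (x x' : X) : ℝ≥0∞ :=
  sInf {L : ℝ≥0∞ | ∃ ℓ : ℝ≥0, L = (ℓ : ℝ≥0∞) ∧ ∃ φ : ℝ → X,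
    LipschitzOnWith 1 φ (Set.Icc 0 (ℓ : ℝ)) ∧ φ 0 = x ∧ φ (ℓ : ℝ) = x'}

open Filter Set

lemma nonexp_edist_def {Y X : Type*} [EMetricSpace Y] [EMetricSpace X]
    (f g : NonexpMap Y X) : edist f g = ⨆ y : Y, edist (f.1 y) (g.1 y) := rfl

lemma nonexp_edist_apply_le {Y X : Type*} [EMetricSpace Y] [EMetricSpace X]
    (f g : NonexpMap Y X) (y : Y) : edist (f.1 y) (g.1 y) ≤ edist f g :=
  le_iSup (fun y => edist (f.1 y) (g.1 y)) y

lemma edist_zero_real {t : ℝ} (ht : 0 ≤ t) : edist (0 : ℝ) t = ENNReal.ofReal t := by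
  rw [edist_dist, Real.dist_eq, abs_sub_comm, sub_zero, abs_of_nonneg ht]

lemma edist_real (s t : ℝ) : edist s t = ENNReal.ofReal |s - t| := by
  rw [edist_dist, Real.dist_eq]

lemma edist_le_intrinsicEDist {Z : Type*} [EMetricSpace Z] (x x' : Z) :
    edist x x' ≤ intrinsicEDist x x' := by
  refine le_sInf ?_
  rintro L ⟨ℓ, rfl, φ, hφ, h0, h1⟩
  have h := hφ (Set.left_mem_Icc.2 ℓ.coe_nonneg) (Set.right_mem_Icc.2 ℓ.coe_nonneg)
  rw [h0, h1, edist_zero_real ℓ.coe_nonneg] at h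
  calc edist x x' ≤ ↑(1:ℝ≥0) * ENNReal.ofReal (ℓ:ℝ) := h
    _ = (ℓ : ℝ≥0∞) := by rw [ENNReal.coe_one, one_mul, ENNReal.ofReal_coe_nnreal]

lemma clamp_abs (e s t : ℝ) : |max 0 (min s e) - max 0 (min t e)| ≤ |s - t| :=
  le_trans (by simpa using abs_max_sub_max_le_max 0 (min s e) 0 (min t e))
    (by simpa using abs_min_sub_min_le_max s e t e)

lemma key_limit_curve {X Y : Type*} [EMetricSpace X] [EMetricSpace Y]
    (hX : ∀ (x : X) (r : ℝ≥0), IsCompact (EMetric.closedBall x (r : ℝ≥0∞)))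
    (U : Ultrafilter ℕ) (hU : (U : Filter ℕ) ≤ Filter.atTop)
    (a b : NonexpMap Y X) (bs : ℕ → NonexpMap Y X)
    (hb : ∀ y, Filter.Tendsto (fun n => (bs n).1 y) U (nhds (b.1 y)))
    (e : ℝ≥0) (he : 0 < e)
    (ℓ : ℕ → ℝ≥0) (φ : ℕ → ℝ → NonexpMap Y X)
    (hφl : ∀ n, LipschitzOnWith 1 (φ n) (Set.Icc (0:ℝ) ((ℓ n : ℝ))))
    (hφ0 : ∀ n, φ n 0 = a) (hφ1 : ∀ n, φ n ((ℓ n : ℝ)) = bs n)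
    (hℓ : ∀ δ : ℝ, 0 < δ → ∀ᶠ n in Filter.atTop, (ℓ n : ℝ) ≤ (e:ℝ) * (1 + δ)) :
    ∃ ψ : ℝ → NonexpMap Y X, LipschitzOnWith 1 ψ (Set.Icc (0:ℝ) ((e:ℝ))) ∧
      ψ 0 = a ∧ ψ ((e:ℝ)) = b := by
  have her : (0:ℝ) < (e:ℝ) := he
  set c : ℕ → ℝ → ℝ := fun n t => (max 0 (min t (e:ℝ))) * ((ℓ n : ℝ) / (e:ℝ)) with hc
  have hc_mem : ∀ n t, c n t ∈ Set.Icc (0:ℝ) ((ℓ n : ℝ)) := by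
    intro n t
    constructor
    · apply mul_nonneg (le_max_left _ _) (div_nonneg (ℓ n).coe_nonneg her.le)
    · calc (max 0 (min t (e:ℝ))) * ((ℓ n : ℝ) / (e:ℝ))
          ≤ (e:ℝ) * ((ℓ n : ℝ) / (e:ℝ)) := by
            apply mul_le_mul_of_nonneg_right _ (div_nonneg (ℓ n).coe_nonneg her.le)
            exact max_le her.le (min_le_right _ _)
        _ = (ℓ n : ℝ) := by field_simp
  have hc0 : ∀ n, c n 0 = 0 := by
    intro n; simp [hc, min_eq_left her.le]
  have hce : ∀ n, c n ((e:ℝ)) = (ℓ n : ℝ) := by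
    intro n; simp only [hc, min_self, max_eq_right her.le]; field_simp
  -- distance from `a` along the curves
  have hdista : ∀ n t y, edist (a.1 y) ((φ n (c n t)).1 y) ≤ ENNReal.ofReal ((ℓ n : ℝ)) := by
    intro n t y
    calc edist (a.1 y) ((φ n (c n t)).1 y)
        ≤ edist (φ n 0) (φ n (c n t)) := by
          rw [← hφ0 n]; exact nonexp_edist_apply_le _ _ y
      _ ≤ ↑(1:ℝ≥0) * edist (0:ℝ) (c n t) :=
          hφl n (Set.left_mem_Icc.2 (ℓ n).coe_nonneg) (hc_mem n t)
      _ = ENNReal.ofReal (c n t) := by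
          rw [ENNReal.coe_one, one_mul, edist_zero_real (hc_mem n t).1]
      _ ≤ ENNReal.ofReal ((ℓ n : ℝ)) := ENNReal.ofReal_le_ofReal (hc_mem n t).2
  have hball : ∀ᶠ n in (U : Filter ℕ), ∀ t y,
      ((φ n (c n t)).1 y) ∈ EMetric.closedBall (a.1 y) ((2*e : ℝ≥0) : ℝ≥0∞) := by
    filter_upwards [hU (hℓ 1 one_pos)] with n hn t y
    change edist _ _ ≤ _; rw [edist_comm]
    refine (hdista n t y).trans ?_
    rw [← ENNReal.ofReal_coe_nnreal]
    refine ENNReal.ofReal_le_ofReal ?_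
    push_cast
    linarith
  have hex : ∀ t y, ∃ x, Filter.Tendsto (fun n => (φ n (c n t)).1 y) U (nhds x) := by
    intro t y
    have hle : (↑(U.map fun n => (φ n (c n t)).1 y) : Filter X) ≤
        Filter.principal (EMetric.closedBall (a.1 y) ((2*e : ℝ≥0) : ℝ≥0∞)) := by
      rw [Ultrafilter.coe_map, Filter.le_principal_iff, Filter.mem_map]
      exact hball.mono fun n h => h t y
    obtain ⟨x, -, hx⟩ := (hX (a.1 y) (2*e)).ultrafilter_le_nhds _ hle
    refine ⟨x, ?_⟩
    rwa [Filter.Tendsto, ← Ultrafilter.coe_map]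
  choose Ψ hΨ using hex
  have hlip : ∀ t, LipschitzWith 1 (fun y => Ψ t y) := by
    intro t
    apply LipschitzWith.of_edist_le
    intro y y'
    refine le_of_tendsto ((hΨ t y).edist (hΨ t y')) (Filter.Eventually.of_forall fun n => ?_)
    simpa using (φ n (c n t)).2 y y'
  set ψ : ℝ → NonexpMap Y X := fun t => ⟨fun y => Ψ t y, hlip t⟩ with hψdef
  have hψlip : LipschitzOnWith 1 ψ (Set.Icc (0:ℝ) ((e:ℝ))) := by
    intro s _ t _
    rw [nonexp_edist_def, ENNReal.coe_one, one_mul]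
    refine iSup_le fun y => ?_
    have key2 : ∀ δ : ℝ, 0 < δ →
        edist (Ψ s y) (Ψ t y) ≤ ENNReal.ofReal (|s - t| * (1 + δ)) := by
      intro δ hδ
      refine le_of_tendsto ((hΨ s y).edist (hΨ t y)) ?_
      filter_upwards [hU (hℓ δ hδ)] with n hn
      have h2 : edist ((φ n (c n s)).1 y) ((φ n (c n t)).1 y)
          ≤ edist (φ n (c n s)) (φ n (c n t)) := nonexp_edist_apply_le _ _ y
      have h3 : edist (φ n (c n s)) (φ n (c n t)) ≤ ↑(1:ℝ≥0) * edist (c n s) (c n t) :=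
        hφl n (hc_mem n s) (hc_mem n t)
      have h5 : |c n s - c n t| ≤ |s - t| * (1 + δ) := by
        have hdiv0 : (0:ℝ) ≤ (ℓ n : ℝ) / (e:ℝ) := div_nonneg (ℓ n).coe_nonneg her.le
        have heq : |c n s - c n t| = |max 0 (min s (e:ℝ)) - max 0 (min t (e:ℝ))| * ((ℓ n : ℝ)/(e:ℝ)) := by
          rw [hc]; rw [← sub_mul, abs_mul, abs_of_nonneg hdiv0]
        rw [heq]
        have hdiv : (ℓ n : ℝ)/(e:ℝ) ≤ 1 + δ := by
          rw [div_le_iff₀ her]; linarith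
        exact mul_le_mul (clamp_abs _ s t) hdiv hdiv0 (abs_nonneg _)
      calc edist ((φ n (c n s)).1 y) ((φ n (c n t)).1 y)
          ≤ ↑(1:ℝ≥0) * edist (c n s) (c n t) := h2.trans h3
        _ = ENNReal.ofReal |c n s - c n t| := by rw [ENNReal.coe_one, one_mul, edist_real]
        _ ≤ ENNReal.ofReal (|s - t| * (1 + δ)) := ENNReal.ofReal_le_ofReal h5
    refine ENNReal.le_of_forall_pos_le_add fun ε hε _ => ?_
    have hδ : (0:ℝ) < (ε:ℝ)/(|s - t|+1) := by positivity
    refine (key2 _ hδ).trans ?_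
    have hb1 : |s - t| * (1 + (ε:ℝ)/(|s - t|+1)) ≤ |s - t| + (ε:ℝ) := by
      have hle1 : |s - t|/(|s - t|+1) ≤ 1 :=
        (div_le_one (by positivity)).2 (by linarith [abs_nonneg (s - t)])
      have h1 : |s - t| * ((ε:ℝ)/(|s - t|+1)) ≤ (ε:ℝ) := by
        calc |s - t| * ((ε:ℝ)/(|s - t|+1)) = (|s - t|/(|s - t|+1)) * (ε:ℝ) := by ring
          _ ≤ 1 * (ε:ℝ) := mul_le_mul_of_nonneg_right hle1 ε.coe_nonneg
          _ = (ε:ℝ) := one_mul _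
      nlinarith [abs_nonneg (s - t)]
    calc ENNReal.ofReal (|s - t| * (1 + (ε:ℝ)/(|s - t|+1)))
        ≤ ENNReal.ofReal (|s - t| + (ε:ℝ)) := ENNReal.ofReal_le_ofReal hb1
      _ ≤ ENNReal.ofReal |s - t| + ENNReal.ofReal (ε:ℝ) := ENNReal.ofReal_add_le
      _ = edist s t + ↑ε := by rw [edist_real, ENNReal.ofReal_coe_nnreal]
  have hψ0 : ψ 0 = a := by
    apply Subtype.ext; funext y
    refine tendsto_nhds_unique (hΨ 0 y) ?_
    have heqf : (fun n => (φ n (c n 0)).1 y) = fun _ => a.1 y :=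
      funext fun n => by rw [hc0 n, hφ0 n]
    rw [heqf]; exact tendsto_const_nhds
  have hψe : ψ ((e:ℝ)) = b := by
    apply Subtype.ext; funext y
    refine tendsto_nhds_unique (hΨ ((e:ℝ)) y) ?_
    have heqf : (fun n => (φ n (c n ((e:ℝ)))).1 y) = fun n => (bs n).1 y :=
      funext fun n => by rw [hce n, hφ1 n]
    rw [heqf]; exact hb y
  exact ⟨ψ, hψlip, hψ0, hψe⟩

/-- Let `X` be a complete extended metric space with compact finite-radius closed balls and
`Y` any extended metric space.  The set `H` of nonexpansive maps `Y → X`, equipped with the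
intrinsic metric `D = (d_sup)_ℓ` associated to the supremum metric, is a complete extended
metric space, and it is convex: any `f, g ∈ H` with `D(f, g) < ∞` are joined by a
`1`-Lipschitz curve `[0, D(f, g)] → (H, d_sup)`. -/
theorem nonexpMap_intrinsic_complete_convex {X Y : Type*} [EMetricSpace X] [CompleteSpace X]
    [EMetricSpace Y]
    (hX : ∀ (x : X) (r : ℝ≥0), IsCompact (EMetric.closedBall x (r : ℝ≥0∞))) :
    (∀ u : ℕ → NonexpMap Y X,
      (∀ ε : ℝ≥0∞, 0 < ε → ∃ N : ℕ, ∀ m n : ℕ, N ≤ m → N ≤ n →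
        intrinsicEDist (u m) (u n) < ε) →
      ∃ f : NonexpMap Y X,
        Filter.Tendsto (fun n => intrinsicEDist (u n) f) Filter.atTop (nhds 0)) ∧
    (∀ f g : NonexpMap Y X, intrinsicEDist f g ≠ ⊤ →
      ∃ φ : ℝ → NonexpMap Y X,
        LipschitzOnWith 1 φ (Set.Icc 0 (intrinsicEDist f g).toReal) ∧
        φ 0 = f ∧ φ (intrinsicEDist f g).toReal = g) := by
  have hUex : ∃ U : Ultrafilter ℕ, (U : Filter ℕ) ≤ Filter.atTop :=
    ⟨Ultrafilter.of Filter.atTop, Ultrafilter.of_le _⟩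
  obtain ⟨U, hU⟩ := hUex
  constructor
  · -- completeness
    intro u hu
    obtain ⟨N₁, hN₁⟩ := hu 1 zero_lt_one
    have hex : ∀ y, ∃ x, Filter.Tendsto (fun n => (u n).1 y) U (nhds x) := by
      intro y
      have hmem : ∀ᶠ n in (U : Filter ℕ),
          (u n).1 y ∈ EMetric.closedBall ((u N₁).1 y) ((1 : ℝ≥0) : ℝ≥0∞) := by
        filter_upwards [hU (Filter.eventually_ge_atTop N₁)] with n hn
        change edist _ _ ≤ _; rw [edist_comm]
        calc edist ((u N₁).1 y) ((u n).1 y) ≤ edist (u N₁) (u n) := nonexp_edist_apply_le _ _ y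
          _ ≤ intrinsicEDist (u N₁) (u n) := edist_le_intrinsicEDist _ _
          _ ≤ ((1 : ℝ≥0) : ℝ≥0∞) := by
              simpa using (hN₁ N₁ n le_rfl hn).le
      have hle : (↑(U.map fun n => (u n).1 y) : Filter X) ≤
          Filter.principal (EMetric.closedBall ((u N₁).1 y) ((1 : ℝ≥0) : ℝ≥0∞)) := by
        rw [Ultrafilter.coe_map, Filter.le_principal_iff, Filter.mem_map]
        exact hmem
      obtain ⟨x, -, hx⟩ := (hX ((u N₁).1 y) 1).ultrafilter_le_nhds _ hle
      refine ⟨x, ?_⟩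
      rwa [Filter.Tendsto, ← Ultrafilter.coe_map]
    choose f0 hf0 using hex
    have hf0lip : LipschitzWith 1 f0 := LipschitzWith.of_edist_le fun y y' =>
      le_of_tendsto ((hf0 y).edist (hf0 y'))
        (Filter.Eventually.of_forall fun n => by simpa using (u n).2 y y')
    refine ⟨⟨f0, hf0lip⟩, ?_⟩
    rw [ENNReal.tendsto_atTop_zero]
    intro ε hε
    obtain ⟨ε', hε'0, hε'le⟩ : ∃ ε' : ℝ≥0, 0 < ε' ∧ (ε' : ℝ≥0∞) ≤ ε := by
      rcases eq_or_ne ε ⊤ with rfl | h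
      · exact ⟨1, one_pos, le_top⟩
      · exact ⟨ε.toNNReal, ENNReal.toNNReal_pos hε.ne' h, (ENNReal.coe_toNNReal h).le⟩
    obtain ⟨N, hN⟩ := hu ε' (by exact_mod_cast hε'0)
    refine ⟨N, fun m hm => ?_⟩
    have hcur : ∀ n : ℕ, ∃ (L : ℝ≥0) (φn : ℝ → NonexpMap Y X), L ≤ ε' ∧
        LipschitzOnWith 1 φn (Set.Icc (0:ℝ) ((L:ℝ))) ∧ φn 0 = u m ∧
        φn ((L:ℝ)) = u (max n N) := by
      intro n
      have h := hN m (max n N) hm (le_max_right n N)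
      rw [intrinsicEDist, sInf_lt_iff] at h
      obtain ⟨LL, ⟨L, rfl, φn, h1, h2, h3⟩, hlt⟩ := h
      exact ⟨L, φn, by exact_mod_cast hlt.le, h1, h2, h3⟩
    choose L φn hLle hlip h0 h1 using hcur
    have hb : ∀ y, Filter.Tendsto (fun n => (u (max n N)).1 y) U (nhds (f0 y)) := by
      intro y
      refine (hf0 y).congr' ?_
      filter_upwards [hU (Filter.eventually_ge_atTop N)] with n hn
      rw [max_eq_left hn]
    have hl : ∀ δ : ℝ, 0 < δ → ∀ᶠ n in Filter.atTop, (L n : ℝ) ≤ (ε':ℝ) * (1 + δ) := by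
      intro δ hδ
      refine Filter.Eventually.of_forall fun n => ?_
      have h1 : (L n : ℝ) ≤ (ε' : ℝ) := by exact_mod_cast hLle n
      nlinarith [ε'.coe_nonneg]
    obtain ⟨ψ, hψ1, hψ2, hψ3⟩ := key_limit_curve hX U hU (u m) ⟨f0, hf0lip⟩
      (fun n => u (max n N)) hb ε' hε'0 L φn hlip h0 h1 hl
    calc intrinsicEDist (u m) ⟨f0, hf0lip⟩ ≤ (ε' : ℝ≥0∞) :=
        sInf_le ⟨ε', rfl, ψ, hψ1, hψ2, hψ3⟩
      _ ≤ ε := hε'le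
  · -- convexity
    intro f g hfg
    rcases eq_or_ne (intrinsicEDist f g) 0 with hD0 | hD0
    · have hfgeq : f = g := eq_of_edist_eq_zero
        (le_antisymm (le_trans (edist_le_intrinsicEDist f g) hD0.le) (zero_le'))
      refine ⟨fun _ => f, fun x _ y _ => by simp, rfl, hfgeq⟩
    · set e : ℝ≥0 := (intrinsicEDist f g).toNNReal with he_def
      have he : 0 < e := ENNReal.toNNReal_pos hD0 hfg
      have hcur : ∀ n : ℕ, ∃ (Ln : ℝ≥0) (φn : ℝ → NonexpMap Y X),
          (Ln:ℝ) ≤ (e:ℝ) + 1/((n:ℝ)+1) ∧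
          LipschitzOnWith 1 φn (Set.Icc (0:ℝ) ((Ln:ℝ))) ∧ φn 0 = f ∧ φn ((Ln:ℝ)) = g := by
        intro n
        have hlt : intrinsicEDist f g < intrinsicEDist f g + ENNReal.ofReal (1/((n:ℝ)+1)) :=
          ENNReal.lt_add_right hfg (ENNReal.ofReal_pos.2 (by positivity)).ne'
        rw [intrinsicEDist, sInf_lt_iff] at hlt
        obtain ⟨LL, ⟨Ln, rfl, φn, ha, hb', hc'⟩, hlt⟩ := hlt
        refine ⟨Ln, φn, ?_, ha, hb', hc'⟩
        have h2 := ENNReal.toReal_mono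
          (ENNReal.add_ne_top.2 ⟨hfg, ENNReal.ofReal_ne_top⟩) hlt.le
        rw [ENNReal.toReal_add hfg ENNReal.ofReal_ne_top,
          ENNReal.toReal_ofReal (by positivity), ENNReal.coe_toReal] at h2
        exact h2
      choose L φn hLle hlip h0 h1 using hcur
      have hl : ∀ δ : ℝ, 0 < δ → ∀ᶠ n in Filter.atTop, (L n : ℝ) ≤ (e:ℝ) * (1 + δ) := by
        intro δ hδ
        have hev : ∀ᶠ n : ℕ in Filter.atTop, 1/((n:ℝ)+1) < (e:ℝ)*δ :=
          tendsto_one_div_add_atTop_nhds_zero_nat.eventually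
            (gt_mem_nhds (by positivity : (0:ℝ) < (e:ℝ)*δ))
        filter_upwards [hev] with n hn
        have := hLle n
        nlinarith
      obtain ⟨ψ, hψ1, hψ2, hψ3⟩ := key_limit_curve hX U hU f g (fun _ => g)
        (fun y => tendsto_const_nhds) e he L φn hlip h0 h1 hl
      have hre : ((e:ℝ)) = (intrinsicEDist f g).toReal := rfl
      exact ⟨ψ, hre ▸ hψ1, hψ2, hre ▸ hψ3⟩
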